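/- Let L ≥ 0. Let X_R (n_R×N₁), Y_R (m_R×N₁), U_R (m_R×N₂), V_R (n_R×N₂) be real matrices for which there exists a real m_R×n_R matrix M_R with σ_max(M_R) ≤ L, Y_R = M_R·X_R and V_R = M_Rᵀ·U_R. Then for all real matrices X (n×N₁), Y (m×N₁), U (m×N₂), V (n×N₂) satisfying the Gram matrix equalities [X V]ᵀ·[X V] = [X_R V_R]ᵀ·[X_R V_R] and [Y U]ᵀ·[Y U] = [Y_R U_R]ᵀ·[Y_R U_R], there exists a real m×n matrix M with σ_max(M) ≤ L such that Y = M·X and V = Mᵀ·U. -/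

import Mathlib

open Matrix



variable {k : Type*} [Fintype k] [DecidableEq k]

noncomputable def rpinv {S : Matrix k k ℝ} (hS : S.IsHermitian) : Matrix k k ℝ :=
  (hS.eigenvectorUnitary : Matrix k k ℝ) * diagonal (fun i => (hS.eigenvalues i)⁻¹) *
    star (hS.eigenvectorUnitary : Matrix k k ℝ)

lemma UDU_mul {S : Matrix k k ℝ} (hS : S.IsHermitian) (d e : k → ℝ) :
    ((hS.eigenvectorUnitary : Matrix k k ℝ) * diagonal d * star (hS.eigenvectorUnitary : Matrix k k ℝ)) *
    ((hS.eigenvectorUnitary : Matrix k k ℝ) * diagonal e * star (hS.eigenvectorUnitary : Matrix k k ℝ)) =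
    (hS.eigenvectorUnitary : Matrix k k ℝ) * diagonal (fun i => d i * e i) * star (hS.eigenvectorUnitary : Matrix k k ℝ) := by
  have h1 : star (hS.eigenvectorUnitary : Matrix k k ℝ) * (hS.eigenvectorUnitary : Matrix k k ℝ) = 1 :=
    mem_unitaryGroup_iff'.mp hS.eigenvectorUnitary.2
  set U := (hS.eigenvectorUnitary : Matrix k k ℝ)
  simp only [← Matrix.mul_assoc]
  have h2 : U * diagonal d * star U * U = U * diagonal d := by
    rw [Matrix.mul_assoc, h1, Matrix.mul_one]
  rw [h2, Matrix.mul_assoc U, diagonal_mul_diagonal]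

lemma spectral' {S : Matrix k k ℝ} (hS : S.IsHermitian) :
    S = (hS.eigenvectorUnitary : Matrix k k ℝ) * diagonal hS.eigenvalues *
      star (hS.eigenvectorUnitary : Matrix k k ℝ) := by
  have := hS.spectral_theorem
  simpa [RCLike.ofReal_real_eq_id] using this
lemma rpinv_conjTranspose {S : Matrix k k ℝ} (hS : S.IsHermitian) : (rpinv hS)ᴴ = rpinv hS := by
  unfold rpinv
  rw [star_eq_conjTranspose]
  simp only [conjTranspose_mul, conjTranspose_conjTranspose, diagonal_conjTranspose,
    ← Matrix.mul_assoc]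
  congr 2

lemma mul_rpinv_eq {S : Matrix k k ℝ} (hS : S.IsHermitian) :
    S * rpinv hS = (hS.eigenvectorUnitary : Matrix k k ℝ) *
      diagonal (fun i => hS.eigenvalues i * (hS.eigenvalues i)⁻¹) *
      star (hS.eigenvectorUnitary : Matrix k k ℝ) := by
  have h : S * rpinv hS = ((hS.eigenvectorUnitary : Matrix k k ℝ) * diagonal hS.eigenvalues *
      star (hS.eigenvectorUnitary : Matrix k k ℝ)) * rpinv hS := by rw [← spectral' hS]
  rw [h]
  unfold rpinv
  exact UDU_mul hS _ _

lemma rpinv_mul_eq {S : Matrix k k ℝ} (hS : S.IsHermitian) :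
    rpinv hS * S = S * rpinv hS := by
  have h : rpinv hS * S = rpinv hS * ((hS.eigenvectorUnitary : Matrix k k ℝ) *
      diagonal hS.eigenvalues * star (hS.eigenvectorUnitary : Matrix k k ℝ)) := by
    rw [← spectral' hS]
  rw [h, mul_rpinv_eq]
  unfold rpinv
  rw [UDU_mul hS]
  have : (fun i => (hS.eigenvalues i)⁻¹ * hS.eigenvalues i) =
      (fun i => hS.eigenvalues i * (hS.eigenvalues i)⁻¹) := by
    funext i; ring
  rw [this]

lemma mul_rpinv_mul {S : Matrix k k ℝ} (hS : S.IsHermitian) : S * rpinv hS * S = S := by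
  rw [mul_rpinv_eq]
  have h : (hS.eigenvectorUnitary : Matrix k k ℝ) *
      diagonal (fun i => hS.eigenvalues i * (hS.eigenvalues i)⁻¹) *
      star (hS.eigenvectorUnitary : Matrix k k ℝ) * S =
      ((hS.eigenvectorUnitary : Matrix k k ℝ) *
      diagonal (fun i => hS.eigenvalues i * (hS.eigenvalues i)⁻¹) *
      star (hS.eigenvectorUnitary : Matrix k k ℝ)) * ((hS.eigenvectorUnitary : Matrix k k ℝ) *
      diagonal hS.eigenvalues * star (hS.eigenvectorUnitary : Matrix k k ℝ)) := by
    rw [← spectral' hS]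
  rw [h, UDU_mul hS]
  have h2 : (fun i => hS.eigenvalues i * (hS.eigenvalues i)⁻¹ * hS.eigenvalues i) =
      hS.eigenvalues := by
    ext i
    rcases eq_or_ne (hS.eigenvalues i) 0 with h | h <;> field_simp [h]
  rw [h2, ← spectral' hS]

lemma rpinv_mul_rpinv {S : Matrix k k ℝ} (hS : S.IsHermitian) :
    rpinv hS * (S * rpinv hS) = rpinv hS := by
  rw [mul_rpinv_eq]
  unfold rpinv
  rw [UDU_mul hS]
  congr 2
  ext i
  rcases eq_or_ne (hS.eigenvalues i) 0 with h | h <;> field_simp [h]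

lemma mul_rpinv_isHermitian {S : Matrix k k ℝ} (hS : S.IsHermitian) :
    (S * rpinv hS)ᴴ = S * rpinv hS := by
  rw [conjTranspose_mul, rpinv_conjTranspose, hS.eq]
  exact rpinv_mul_eq hS

lemma mul_rpinv_idem {S : Matrix k k ℝ} (hS : S.IsHermitian) :
    (S * rpinv hS) * (S * rpinv hS) = S * rpinv hS := by
  simp only [← Matrix.mul_assoc]
  rw [mul_rpinv_mul hS]

lemma psd_smul_nonneg {d : Type*} [Fintype d] {A : Matrix d d ℝ} (hA : A.PosSemidef)
    {c : ℝ} (hc : 0 ≤ c) : (c • A).PosSemidef := by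
  constructor
  · have : (c • A)ᴴ = c • Aᴴ := by
      ext i j; simp [conjTranspose_apply]
    rw [Matrix.IsHermitian, this, hA.1.eq]
  · intro x
    refine le_of_le_of_eq (mul_nonneg hc (hA.2 x)) ?_
    simp only [Finsupp.mul_sum]
    refine Finsupp.sum_congr fun i _ => Finsupp.sum_congr fun j _ => ?_
    simp only [Matrix.smul_apply, smul_eq_mul, star_trivial]
    ring

lemma psd_one_sub_proj {d : Type*} [Fintype d] [DecidableEq d] {F : Matrix d d ℝ}
    (hherm : Fᴴ = F) (hidem : F * F = F) : ((1 : Matrix d d ℝ) - F).PosSemidef := by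
  have key : (1 : Matrix d d ℝ) - F = ((1 : Matrix d d ℝ) - F)ᴴ * ((1 : Matrix d d ℝ) - F) := by
    rw [conjTranspose_sub, conjTranspose_one, hherm, Matrix.mul_sub, Matrix.mul_one,
      Matrix.sub_mul, Matrix.one_mul, hidem]
    abel
  rw [key]
  exact posSemidef_conjTranspose_mul_self _

lemma exists_partial_isometry {p q K : Type*} [Fintype p] [Fintype q] [DecidableEq q] [Fintype K] [DecidableEq K]
    (A : Matrix p K ℝ) (B : Matrix q K ℝ) (h : Aᴴ * A = Bᴴ * B) :
    ∃ Q : Matrix p q ℝ,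
      Q * B = A ∧ (Qᴴ * Q) * B = B ∧ (Qᴴ * Q)ᴴ = Qᴴ * Q ∧
      (Qᴴ * Q) * (Qᴴ * Q) = Qᴴ * Q ∧ (Q * Qᴴ)ᴴ = Q * Qᴴ ∧
      (Q * Qᴴ) * (Q * Qᴴ) = Q * Qᴴ := by
  have hS : (B * Bᴴ).IsHermitian := isHermitian_mul_conjTranspose_self B
  have hE_herm : ((B * Bᴴ) * rpinv hS)ᴴ = (B * Bᴴ) * rpinv hS := mul_rpinv_isHermitian hS
  have hE_idem : ((B * Bᴴ) * rpinv hS) * ((B * Bᴴ) * rpinv hS) = (B * Bᴴ) * rpinv hS :=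
    mul_rpinv_idem hS
  have hES : ((B * Bᴴ) * rpinv hS) * (B * Bᴴ) = B * Bᴴ := mul_rpinv_mul hS
  -- E * B = B
  have hEB : ((B * Bᴴ) * rpinv hS) * B = B := by
    have h0 : ((1 : Matrix q q ℝ) - (B * Bᴴ) * rpinv hS) * (B * Bᴴ) = 0 := by
      rw [Matrix.sub_mul, Matrix.one_mul, hES, sub_self]
    have h1 : (((1 : Matrix q q ℝ) - (B * Bᴴ) * rpinv hS) * B) *
        (((1 : Matrix q q ℝ) - (B * Bᴴ) * rpinv hS) * B)ᴴ = 0 := by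
      rw [conjTranspose_mul, conjTranspose_sub, conjTranspose_one, hE_herm]
      calc ((1 : Matrix q q ℝ) - (B * Bᴴ) * rpinv hS) * B *
            (Bᴴ * (1 - (B * Bᴴ) * rpinv hS))
          = (((1 : Matrix q q ℝ) - (B * Bᴴ) * rpinv hS) * (B * Bᴴ)) *
            (1 - (B * Bᴴ) * rpinv hS) := by simp only [Matrix.mul_assoc]
        _ = 0 := by rw [h0, Matrix.zero_mul]
    have h2 : ((1 : Matrix q q ℝ) - (B * Bᴴ) * rpinv hS) * B = 0 :=
      self_mul_conjTranspose_eq_zero.mp h1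
    rw [Matrix.sub_mul, Matrix.one_mul] at h2
    exact (sub_eq_zero.mp h2).symm
  -- B * R = B  where R = Bᴴ * rpinv hS * B
  have hBR : B * (Bᴴ * rpinv hS * B) = B := by
    calc B * (Bᴴ * rpinv hS * B) = ((B * Bᴴ) * rpinv hS) * B := by
          simp only [Matrix.mul_assoc]
      _ = B := hEB
  have hB1R : B * ((1 : Matrix K K ℝ) - Bᴴ * rpinv hS * B) = 0 := by
    rw [Matrix.mul_sub, Matrix.mul_one, hBR, sub_self]
  -- A * R = A
  have hAR : A * (Bᴴ * rpinv hS * B) = A := by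
    have z : (A * ((1 : Matrix K K ℝ) - Bᴴ * rpinv hS * B))ᴴ *
        (A * ((1 : Matrix K K ℝ) - Bᴴ * rpinv hS * B)) = 0 := by
      rw [conjTranspose_mul]
      calc (1 - Bᴴ * rpinv hS * B)ᴴ * Aᴴ * (A * (1 - Bᴴ * rpinv hS * B))
          = (1 - Bᴴ * rpinv hS * B)ᴴ * ((Aᴴ * A) * (1 - Bᴴ * rpinv hS * B)) := by
            simp only [Matrix.mul_assoc]
        _ = (1 - Bᴴ * rpinv hS * B)ᴴ * ((Bᴴ * B) * (1 - Bᴴ * rpinv hS * B)) := by rw [h]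
        _ = (1 - Bᴴ * rpinv hS * B)ᴴ * (Bᴴ * (B * (1 - Bᴴ * rpinv hS * B))) := by
            simp only [Matrix.mul_assoc]
        _ = 0 := by rw [hB1R, Matrix.mul_zero, Matrix.mul_zero]
    have z2 : A * ((1 : Matrix K K ℝ) - Bᴴ * rpinv hS * B) = 0 :=
      conjTranspose_mul_self_eq_zero.mp z
    rw [Matrix.mul_sub, Matrix.mul_one] at z2
    exact (sub_eq_zero.mp z2).symm
  have hQH : (A * Bᴴ * rpinv hS)ᴴ = rpinv hS * (B * Aᴴ) := by
    simp only [conjTranspose_mul, conjTranspose_conjTranspose, rpinv_conjTranspose,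
      Matrix.mul_assoc]
  have hQQ : (A * Bᴴ * rpinv hS)ᴴ * (A * Bᴴ * rpinv hS) = (B * Bᴴ) * rpinv hS := by
    rw [hQH]
    calc rpinv hS * (B * Aᴴ) * (A * Bᴴ * rpinv hS)
        = rpinv hS * (B * (Aᴴ * A) * (Bᴴ * rpinv hS)) := by simp only [Matrix.mul_assoc]
      _ = rpinv hS * (B * (Bᴴ * B) * (Bᴴ * rpinv hS)) := by rw [h]
      _ = rpinv hS * ((B * Bᴴ) * ((B * Bᴴ) * rpinv hS)) := by simp only [Matrix.mul_assoc]
      _ = (rpinv hS * (B * Bᴴ)) * ((B * Bᴴ) * rpinv hS) := by simp only [Matrix.mul_assoc]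
      _ = ((B * Bᴴ) * rpinv hS) * ((B * Bᴴ) * rpinv hS) := by rw [rpinv_mul_eq hS]
      _ = (B * Bᴴ) * rpinv hS := hE_idem
  have hQE : (A * Bᴴ * rpinv hS) * ((B * Bᴴ) * rpinv hS) = A * Bᴴ * rpinv hS := by
    calc (A * Bᴴ * rpinv hS) * ((B * Bᴴ) * rpinv hS)
        = A * (Bᴴ * (rpinv hS * (B * Bᴴ * rpinv hS))) := by simp only [Matrix.mul_assoc]
      _ = A * (Bᴴ * rpinv hS) := by rw [rpinv_mul_rpinv hS]
      _ = A * Bᴴ * rpinv hS := by rw [Matrix.mul_assoc]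
  refine ⟨A * Bᴴ * rpinv hS, ?_, ?_, ?_, ?_, ?_, ?_⟩
  case _ =>
    calc A * Bᴴ * rpinv hS * B = A * (Bᴴ * rpinv hS * B) := by simp only [Matrix.mul_assoc]
      _ = A := hAR
  case _ =>
    rw [hQQ]; exact hEB
  case _ =>
    rw [hQQ]; exact hE_herm
  case _ =>
    rw [hQQ]; exact hE_idem
  case _ =>
    rw [conjTranspose_mul, conjTranspose_conjTranspose]
  case _ =>
    calc (A * Bᴴ * rpinv hS * (A * Bᴴ * rpinv hS)ᴴ) * (A * Bᴴ * rpinv hS * (A * Bᴴ * rpinv hS)ᴴ)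
        = (A * Bᴴ * rpinv hS * ((A * Bᴴ * rpinv hS)ᴴ * (A * Bᴴ * rpinv hS))) *
            (A * Bᴴ * rpinv hS)ᴴ := by simp only [Matrix.mul_assoc]
      _ = (A * Bᴴ * rpinv hS * ((B * Bᴴ) * rpinv hS)) * (A * Bᴴ * rpinv hS)ᴴ := by rw [hQQ]
      _ = (A * Bᴴ * rpinv hS) * (A * Bᴴ * rpinv hS)ᴴ := by rw [hQE]

/-- Lemma 3.11 (Step 2): interpolability is transferred to any quadruple having the
same Gram matrices. -/
theorem interpolable_of_same_gram
    (nR mR N₁ N₂ : ℕ) (L : ℝ) (hL : 0 ≤ L)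
    (XR : Matrix (Fin nR) (Fin N₁) ℝ) (YR : Matrix (Fin mR) (Fin N₁) ℝ)
    (UR : Matrix (Fin mR) (Fin N₂) ℝ) (VR : Matrix (Fin nR) (Fin N₂) ℝ)
    (MR : Matrix (Fin mR) (Fin nR) ℝ)
    (hMR : (L ^ 2 • (1 : Matrix (Fin nR) (Fin nR) ℝ) - MRᵀ * MR).PosSemidef)
    (hYR : YR = MR * XR) (hVR : VR = MRᵀ * UR) :
    ∀ (n m : ℕ) (X : Matrix (Fin n) (Fin N₁) ℝ) (Y : Matrix (Fin m) (Fin N₁) ℝ)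
      (U : Matrix (Fin m) (Fin N₂) ℝ) (V : Matrix (Fin n) (Fin N₂) ℝ),
      (Matrix.fromCols X V)ᵀ * Matrix.fromCols X V =
        (Matrix.fromCols XR VR)ᵀ * Matrix.fromCols XR VR →
      (Matrix.fromCols Y U)ᵀ * Matrix.fromCols Y U =
        (Matrix.fromCols YR UR)ᵀ * Matrix.fromCols YR UR →
      ∃ M : Matrix (Fin m) (Fin n) ℝ,
        (L ^ 2 • (1 : Matrix (Fin n) (Fin n) ℝ) - Mᵀ * M).PosSemidef ∧
        Y = M * X ∧ V = Mᵀ * U := by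
  intro n m X Y U V h1 h2
  simp only [← conjTranspose_eq_transpose_of_trivial] at hMR hVR h1 h2 ⊢
  obtain ⟨P, hPB, hPPB, hPPh, hPPi, hPPth, hPPti⟩ :=
    exists_partial_isometry (fromCols X V) (fromCols XR VR) h1
  obtain ⟨Q, hQB, hQQB, hQQh, hQQi, hQQth, hQQti⟩ :=
    exists_partial_isometry (fromCols Y U) (fromCols YR UR) h2
  rw [mul_fromCols, fromCols_ext_iff] at hPB hPPB hQB hQQB
  obtain ⟨hPX, hPV⟩ := hPB
  obtain ⟨hPPX, hPPV⟩ := hPPB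
  obtain ⟨hQY, hQU⟩ := hQB
  obtain ⟨hQQY, hQQU⟩ := hQQB
  refine ⟨Q * MR * Pᴴ, ?_, ?_, ?_⟩
  · have key : L ^ 2 • (1 : Matrix (Fin n) (Fin n) ℝ) - (Q * MR * Pᴴ)ᴴ * (Q * MR * Pᴴ) =
        L ^ 2 • ((1 : Matrix (Fin n) (Fin n) ℝ) - P * Pᴴ) +
        P * ((L ^ 2 • (1 : Matrix (Fin nR) (Fin nR) ℝ) - MRᴴ * MR) +
          MRᴴ * ((1 : Matrix (Fin mR) (Fin mR) ℝ) - Qᴴ * Q) * MR) * Pᴴ := by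
      simp only [conjTranspose_mul, conjTranspose_conjTranspose, Matrix.mul_sub,
        Matrix.sub_mul, Matrix.mul_add, Matrix.add_mul, Matrix.mul_one, Matrix.one_mul,
        smul_sub, Matrix.smul_mul, Matrix.mul_smul, Matrix.mul_assoc]
      abel
    rw [key]
    apply PosSemidef.add
    · exact psd_smul_nonneg (psd_one_sub_proj hPPth hPPti) (sq_nonneg L)
    · exact ((hMR.add ((psd_one_sub_proj hQQh hQQi).conjTranspose_mul_mul_same
        MR)).mul_mul_conjTranspose_same P)
  · calc Y = Q * YR := hQY.symm
      _ = Q * (MR * XR) := by rw [hYR]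
      _ = Q * (MR * ((Pᴴ * P) * XR)) := by rw [hPPX]
      _ = Q * MR * Pᴴ * (P * XR) := by simp only [Matrix.mul_assoc]
      _ = Q * MR * Pᴴ * X := by rw [hPX]
  · have hMH : (Q * MR * Pᴴ)ᴴ = P * (MRᴴ * Qᴴ) := by
      simp only [conjTranspose_mul, conjTranspose_conjTranspose, Matrix.mul_assoc]
    calc V = P * VR := hPV.symm
      _ = P * (MRᴴ * UR) := by rw [hVR]
      _ = P * (MRᴴ * ((Qᴴ * Q) * UR)) := by rw [hQQU]
      _ = P * (MRᴴ * Qᴴ) * (Q * UR) := by simp only [Matrix.mul_assoc]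
      _ = (Q * MR * Pᴴ)ᴴ * U := by rw [hQU, hMH]
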